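/- Let g : ℝ → ℝ be continuous with g(x) > 0 for all x, g vanishing at infinity, and suppose there exist g₀ > 0 and x₀ > 0 such that g(x) ≤ g₀/x² whenever |x| > x₀. Then for every f ∈ AAP(ℝ) and every ε > 0 there exist finite ℂ-linear combinations p and h of characters x ↦ exp(iξx), ξ ∈ ℝ, such that the supremum norm of f − (p + g·h) is at most ε. In other words, sums of exponential functions plus g times sums of exponential functions are dense in AAP(ℝ) in the supremum norm. -/

import Mathlib

set_option maxHeartbeats 1000000

open scoped Real


/-- The character `x ↦ exp(i ξ x)` as a bounded continuous function on `ℝ`. -/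
noncomputable def charFn (ξ : ℝ) : BoundedContinuousFunction ℝ ℂ :=
  BoundedContinuousFunction.ofNormedAddCommGroup
    (fun x : ℝ => Complex.exp ((ξ * x : ℝ) * Complex.I))
    (by continuity) 1
    (fun x => le_of_eq (Complex.norm_exp_ofReal_mul_I (ξ * x)))

/-- `AP(ℝ)`: the sup-norm closure, inside `C_b(ℝ, ℂ)`, of the `ℂ`-linear span of the
characters `x ↦ exp(i ξ x)`. -/
noncomputable def APset : Set (BoundedContinuousFunction ℝ ℂ) :=
  closure ((Submodule.span ℂ (Set.range charFn) : Submodule ℂ (BoundedContinuousFunction ℝ ℂ)) :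
    Set (BoundedContinuousFunction ℝ ℂ))

/-- `f(x) → 0` as `|x| → ∞`. -/
def VanishesAtInfty (f : BoundedContinuousFunction ℝ ℂ) : Prop :=
  Filter.Tendsto (fun x => f x) (Filter.cocompact ℝ) (nhds 0)

/-- `AAP(ℝ)`: the asymptotically almost periodic functions. -/
noncomputable def AAPset : Set (BoundedContinuousFunction ℝ ℂ) :=
  {f | ∃ a ∈ APset, ∃ b : BoundedContinuousFunction ℝ ℂ, VanishesAtInfty b ∧ f = a + b}

/-- Sums of exponential functions plus `g` times sums of exponential functions are dense in
`AAP(ℝ)` in the supremum norm, for any continuous positive `g` vanishing at infinity which is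
eventually dominated by `g₀ / x²`. -/
theorem AAP_approximation (g : ℝ → ℝ) (hgc : Continuous g) (hgpos : ∀ x, 0 < g x)
    (hg0 : Filter.Tendsto g (Filter.cocompact ℝ) (nhds 0))
    (g₀ x₀ : ℝ) (hg₀ : 0 < g₀) (hx₀ : 0 < x₀)
    (hgbound : ∀ x : ℝ, x₀ < |x| → g x ≤ g₀ / x ^ 2)
    (f : BoundedContinuousFunction ℝ ℂ) (hf : f ∈ AAPset)
    (ε : ℝ) (hε : 0 < ε) :
    ∃ p h : BoundedContinuousFunction ℝ ℂ,
      p ∈ Submodule.span ℂ (Set.range charFn) ∧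
      h ∈ Submodule.span ℂ (Set.range charFn) ∧
      ∀ x : ℝ, ‖f x - (p x + (g x : ℂ) * h x)‖ ≤ ε := by
  obtain ⟨a, ha, b, hb, rfl⟩ := hf
  have hε4 : 0 < ε / 4 := by linarith
  -- the trigonometric polynomial `p` approximating `a`
  obtain ⟨p, hp_mem, hp_dist⟩ : ∃ p ∈ (Submodule.span ℂ (Set.range charFn) :
      Set (BoundedContinuousFunction ℝ ℂ)), dist a p < ε / 4 :=
    Metric.mem_closure_iff.mp ha (ε / 4) hε4
  -- a global bound on `g`
  obtain ⟨Kg, hKgc, hKg⟩ : ∃ K : Set ℝ, IsCompact K ∧ ∀ x ∉ K, g x < 1 := by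
    have := (Filter.hasBasis_cocompact.eventually_iff).mp
      (Metric.tendsto_nhds.mp hg0 1 one_pos)
    obtain ⟨K, hKc, hK⟩ := this
    exact ⟨K, hKc, fun x hx => by
      have := hK hx
      rw [Real.dist_eq, sub_zero] at this
      exact lt_of_le_of_lt (le_abs_self _) this⟩
  obtain ⟨Cg, hCg⟩ := hKgc.exists_bound_of_continuousOn hgc.continuousOn
  set G : ℝ := max Cg 1 with hGdef
  have hG1 : (1 : ℝ) ≤ G := le_max_right _ _
  have hG0 : (0 : ℝ) < G := lt_of_lt_of_le one_pos hG1
  have hGb : ∀ x, g x ≤ G := by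
    intro x
    by_cases hx : x ∈ Kg
    · exact le_trans (le_trans (le_abs_self _) (hCg x hx)) (le_max_left _ _)
    · exact le_trans (le_of_lt (hKg x hx)) hG1
  clear_value G
  -- the compact region where `b` is large
  obtain ⟨Kb, hKbc, hKb⟩ : ∃ K : Set ℝ, IsCompact K ∧ ∀ x ∉ K, ‖b x‖ ≤ ε / 4 := by
    have := (Filter.hasBasis_cocompact.eventually_iff).mp
      (Metric.tendsto_nhds.mp hb (ε / 4) hε4)
    obtain ⟨K, hKc, hK⟩ := this
    refine ⟨K, hKc, fun x hx => ?_⟩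
    have := hK hx
    rw [Complex.dist_eq, sub_zero] at this
    exact le_of_lt this
  obtain ⟨r, hr⟩ := hKbc.isBounded.subset_closedBall 0
  set R₀ : ℝ := max r 0 with hR₀def
  have hR₀0 : (0:ℝ) ≤ R₀ := le_max_right _ _
  have hbig : ∀ x : ℝ, R₀ < |x| → ‖b x‖ ≤ ε / 4 := by
    intro x hx
    apply hKb
    intro hmem
    have := hr hmem
    rw [Metric.mem_closedBall, Real.dist_eq, sub_zero] at this
    exact absurd (le_trans this (le_max_left _ _)) (not_le.mpr hx)
  clear_value R₀
  -- the cutoff function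
  set χ : ℝ → ℝ := fun x => min 1 (max 0 (R₀ + 1 - |x|)) with hχdef
  have hχcont : Continuous χ := by fun_prop
  have hχ0 : ∀ x, 0 ≤ χ x := fun x => le_min one_pos.le (le_max_left _ _)
  have hχ1 : ∀ x, χ x ≤ 1 := fun x => min_le_left _ _
  have hχeq1 : ∀ x, |x| ≤ R₀ → χ x = 1 := by
    intro x hx
    have : (1:ℝ) ≤ R₀ + 1 - |x| := by linarith
    simp only [hχdef]
    rw [max_eq_right (by linarith), min_eq_left this]
  have hχeq0 : ∀ x, R₀ + 1 ≤ |x| → χ x = 0 := by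
    intro x hx
    simp only [hχdef]
    rw [max_eq_left (by linarith), min_eq_right one_pos.le]
  -- the compactly supported approximation `b₁` of `b`
  set b₁ : ℝ → ℂ := fun x => (χ x : ℂ) * b x with hb₁def
  have hb₁cont : Continuous b₁ :=
    (Complex.continuous_ofReal.comp hχcont).mul b.continuous
  have hb₁zero : ∀ x, R₀ + 1 ≤ |x| → b₁ x = 0 := by
    intro x hx; simp [hb₁def, hχeq0 x hx]
  have hb₁close : ∀ x, ‖b x - b₁ x‖ ≤ ε / 4 := by
    intro x
    by_cases hx : |x| ≤ R₀
    · simp [hb₁def, hχeq1 x hx]; linarith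
    · have : b x - b₁ x = ((1 - χ x : ℝ) : ℂ) * b x := by
        simp [hb₁def]; push_cast; ring
      rw [this, norm_mul, Complex.norm_real, Real.norm_eq_abs, abs_of_nonneg (by linarith [hχ1 x])]
      calc (1 - χ x) * ‖b x‖ ≤ 1 * (ε / 4) := by
            apply mul_le_mul (by linarith [hχ0 x]) (hbig x (not_le.mp hx))
              (norm_nonneg _) one_pos.le
        _ = ε / 4 := one_mul _
  -- the function `F = b₁ / g`
  set F : ℝ → ℂ := fun x => b₁ x / (g x : ℂ) with hFdef
  have hgne : ∀ x : ℝ, ((g x : ℂ)) ≠ 0 := fun x =>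
    Complex.ofReal_ne_zero.mpr (hgpos x).ne'
  have hFcont : Continuous F := hb₁cont.div (Complex.continuous_ofReal.comp hgc) hgne
  have hgF : ∀ x, (g x : ℂ) * F x = b₁ x := by
    intro x
    simp only [hFdef]
    rw [mul_comm, div_mul_cancel₀ _ (hgne x)]
  have hF0 : ∀ x, R₀ + 1 ≤ |x| → F x = 0 := by
    intro x hx; simp [hFdef, hb₁zero x hx]
  -- a bound on `F`
  obtain ⟨C₂, hC₂⟩ := (isCompact_Icc (a := -(R₀+1)) (b := R₀+1)).exists_bound_of_continuousOn
    hFcont.continuousOn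
  set M : ℝ := max C₂ 1 with hMdef
  have hM1 : (1:ℝ) ≤ M := le_max_right _ _
  have hM0 : (0:ℝ) < M := lt_of_lt_of_le one_pos hM1
  have hM : ∀ x, ‖F x‖ ≤ M := by
    intro x
    by_cases hx : |x| ≤ R₀ + 1
    · have hmem : x ∈ Set.Icc (-(R₀+1)) (R₀+1) := by
        rw [Set.mem_Icc]; constructor <;> [linarith [neg_abs_le x]; linarith [le_abs_self x]]
      exact le_trans (hC₂ x hmem) (le_max_left _ _)
    · rw [hF0 x (le_of_lt (not_le.mp hx))]; simpa using hM0.le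
  clear_value M
  -- choice of the half-period `S`
  obtain ⟨S, hSx₀, hSR, hsqrt⟩ :
      ∃ S : ℝ, x₀ < S ∧ R₀ + 1 ≤ S ∧ Real.sqrt (g₀ * M / (ε/4)) ≤ S := by
    refine ⟨max x₀ (max (R₀ + 1) (Real.sqrt (g₀ * M / (ε/4)))) + 1, ?_, ?_, ?_⟩
    · linarith [le_max_left x₀ (max (R₀ + 1) (Real.sqrt (g₀ * M / (ε/4))))]
    · linarith [le_trans (le_max_left (R₀+1) (Real.sqrt (g₀ * M / (ε/4))))
        (le_max_right x₀ (max (R₀ + 1) (Real.sqrt (g₀ * M / (ε/4)))))]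
    · linarith [le_trans (le_max_right (R₀+1) (Real.sqrt (g₀ * M / (ε/4))))
        (le_max_right x₀ (max (R₀ + 1) (Real.sqrt (g₀ * M / (ε/4)))))]
  have hS0 : (0:ℝ) < S := by linarith
  have htail : g₀ * M / S ^ 2 ≤ ε / 4 := by
    have hv0 : (0:ℝ) ≤ g₀ * M / (ε/4) := by positivity
    have h1 : g₀ * M / (ε/4) ≤ S ^ 2 := by
      have := Real.sq_sqrt hv0
      nlinarith [Real.sqrt_nonneg (g₀ * M / (ε/4))]
    rw [div_le_iff₀ (by positivity)]
    rw [div_le_iff₀ hε4] at h1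
    linarith
  haveI : Fact (0 < 2 * S) := ⟨by linarith⟩
  -- the periodic function `ψ` on the circle
  set ψ : AddCircle (2*S) → ℂ := AddCircle.liftIco (2*S) (-S) F with hψdef
  have hFends : F (-S) = F (-S + 2*S) := by
    rw [hF0 (-S) (by rw [abs_neg, abs_of_pos hS0]; linarith),
      hF0 (-S + 2*S) (by rw [show -S + 2*S = S by ring, abs_of_pos hS0]; linarith)]
  have hψcont : Continuous ψ := AddCircle.liftIco_continuous hFends hFcont.continuousOn
  have hψbound : ∀ z, ‖ψ z‖ ≤ M := fun z => hM _
  set ψC : C(AddCircle (2*S), ℂ) := ⟨ψ, hψcont⟩ with hψCdef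
  -- approximate `ψ` by a Fourier polynomial `P`
  have hψmem : ψC ∈ closure ((Submodule.span ℂ (Set.range (@fourier (2*S))) :
      Submodule ℂ C(AddCircle (2*S), ℂ)) : Set C(AddCircle (2*S), ℂ)) := by
    rw [← Submodule.topologicalClosure_coe, span_fourier_closure_eq_top]
    trivial
  have hδ : 0 < ε / 4 / G := by positivity
  obtain ⟨P, hP_mem, hP_dist⟩ := Metric.mem_closure_iff.mp hψmem (ε / 4 / G) hδ
  obtain ⟨c, hc⟩ := Finsupp.mem_span_range_iff_exists_finsupp.mp hP_mem
  -- the trigonometric polynomial `h`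
  set h : BoundedContinuousFunction ℝ ℂ :=
    ∑ n ∈ c.support, c n • charFn (2 * π * n / (2*S)) with hhdef
  have hh_mem : h ∈ Submodule.span ℂ (Set.range charFn) :=
    Submodule.sum_mem _ fun n _ =>
      Submodule.smul_mem _ _ (Submodule.subset_span ⟨_, rfl⟩)
  have hchar_four : ∀ (n : ℤ) (x : ℝ),
      charFn (2 * π * n / (2*S)) x = fourier n (x : AddCircle (2*S)) := by
    intro n x
    rw [fourier_coe_apply]
    show Complex.exp _ = _
    congr 1
    push_cast
    ring
  have hh_eval : ∀ x : ℝ, h x = P ((x : AddCircle (2*S))) := by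
    intro x
    rw [hhdef, BoundedContinuousFunction.sum_apply]
    rw [← hc, Finsupp.sum]
    rw [ContinuousMap.sum_apply]
    refine Finset.sum_congr rfl fun n _ => ?_
    simp [hchar_four n x]
  refine ⟨p, h, hp_mem, hh_mem, fun x => ?_⟩
  -- the four error terms
  have e1 : ‖a x - p x‖ ≤ ε / 4 := by
    have := BoundedContinuousFunction.dist_coe_le_dist (f := a) (g := p) x
    rw [Complex.dist_eq] at this
    linarith
  have e2 : ‖b x - b₁ x‖ ≤ ε / 4 := hb₁close x
  have e3 : ‖b₁ x - (g x : ℂ) * ψ x‖ ≤ ε / 4 := by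
    by_cases hx : |x| < S
    · have hmem : x ∈ Set.Ico (-S) (-S + 2*S) := by
        rw [Set.mem_Ico]
        constructor
        · linarith [neg_abs_le x]
        · have := lt_of_le_of_lt (le_abs_self x) hx; linarith
      rw [hψdef, AddCircle.liftIco_coe_apply hmem, hgF x]
      simp [hε4.le]
    · push_neg at hx
      rw [hb₁zero x (le_trans hSR hx), zero_sub, norm_neg, norm_mul,
        Complex.norm_real, Real.norm_eq_abs, abs_of_pos (hgpos x)]
      have hgx : g x ≤ g₀ / x ^ 2 := hgbound x (lt_of_lt_of_le hSx₀ hx)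
      have hx2 : S ^ 2 ≤ x ^ 2 := by
        calc S ^ 2 ≤ |x| ^ 2 := pow_le_pow_left₀ hS0.le hx 2
          _ = x ^ 2 := sq_abs x
      calc g x * ‖ψ ↑x‖ ≤ (g₀ / x ^ 2) * M :=
            mul_le_mul hgx (hψbound _) (norm_nonneg _) (by positivity)
        _ ≤ g₀ * M / S ^ 2 := by
            rw [div_mul_eq_mul_div, div_le_div_iff₀ (by nlinarith) (by positivity)]
            nlinarith [mul_le_mul_of_nonneg_left hx2 (by positivity : (0:ℝ) ≤ g₀ * M)]
        _ ≤ ε / 4 := htail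
  have e4 : ‖(g x : ℂ) * (ψ x - h x)‖ ≤ ε / 4 := by
    rw [norm_mul, Complex.norm_real, Real.norm_eq_abs, abs_of_pos (hgpos x)]
    have : ‖ψ ↑x - h x‖ ≤ ε / 4 / G := by
      rw [hh_eval x]
      have := ContinuousMap.dist_apply_le_dist (f := ψC) (g := P) ((x : AddCircle (2*S)))
      rw [Complex.dist_eq] at this
      exact le_trans this hP_dist.le
    calc g x * ‖ψ ↑x - h x‖ ≤ G * (ε / 4 / G) :=
          mul_le_mul (hGb x) this (norm_nonneg _) hG0.le
      _ = ε / 4 := by field_simp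
  have hsplit : (a + b) x - (p x + (g x : ℂ) * h x) =
      (a x - p x) + (b x - b₁ x) + (b₁ x - (g x : ℂ) * ψ x) + (g x : ℂ) * (ψ x - h x) := by
    rw [BoundedContinuousFunction.add_apply]; ring
  rw [hsplit]
  calc ‖_‖ ≤ ‖(a x - p x) + (b x - b₁ x) + (b₁ x - (g x : ℂ) * ψ x)‖
        + ‖(g x : ℂ) * (ψ x - h x)‖ := norm_add_le _ _
    _ ≤ ‖(a x - p x) + (b x - b₁ x)‖ + ‖b₁ x - (g x : ℂ) * ψ x‖
        + ‖(g x : ℂ) * (ψ x - h x)‖ := by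
          linarith [norm_add_le ((a x - p x) + (b x - b₁ x)) (b₁ x - (g x : ℂ) * ψ x)]
    _ ≤ ‖a x - p x‖ + ‖b x - b₁ x‖ + ‖b₁ x - (g x : ℂ) * ψ x‖
        + ‖(g x : ℂ) * (ψ x - h x)‖ := by
          linarith [norm_add_le (a x - p x) (b x - b₁ x)]
    _ ≤ ε := by linarith
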